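/- If π is a semigroup automorphism of (IS_n, *) and a ∈ IS_n is decomposable (i.e. a = b * c for some b, c), then rank(π(a)) = rank(a). -/

import Mathlib

open Equiv

/-- `IS n` : the symmetric inverse semigroup on `{1,…,n}`, modeled as partial
equivalences of `Fin n`.  Composition is left-to-right: `(x.trans y) t = y (x t)`. -/
abbrev IS (n : ℕ) := PEquiv (Fin n) (Fin n)

/-- The domain of a partial injective transformation. -/
def sdom {n : ℕ} (x : IS n) : Set (Fin n) := {a | (x a).isSome}

/-- The image of a partial injective transformation. -/
def sim {n : ℕ} (x : IS n) : Set (Fin n) := {b | (x.symm b).isSome}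

/-- The rank of a partial injective transformation: the cardinality of its image. -/
noncomputable def srank {n : ℕ} (x : IS n) : ℕ := Nat.card (sim x)

/-- The set `A = {1,…,k}` inside `Fin n`, i.e. the first `k` elements. -/
def SetA (n k : ℕ) : Set (Fin n) := {i | (i : ℕ) < k}

/-- The idempotent `e` acting identically on `A`, with `dom e = im e = A`. -/
def sandE (n k : ℕ) : IS n where
  toFun i := if (i : ℕ) < k then some i else none
  invFun i := if (i : ℕ) < k then some i else none
  inv a b := by
    try dsimp only
    split_ifs with h1 h2 <;>
      simp_all [Option.mem_def, eq_comm] <;> rintro rfl <;> omega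

/-- The sandwich multiplication `x * y = x e y` (left-to-right composition). -/
def smul (n k : ℕ) (x y : IS n) : IS n := (x.trans (sandE n k)).trans y

section Aux

variable {n k : ℕ}

private lemma sandE_apply (i : Fin n) :
    sandE n k i = if (i : ℕ) < k then some i else none := rfl

private lemma sandE_symm_apply (i : Fin n) :
    (sandE n k).symm i = if (i : ℕ) < k then some i else none := rfl

private lemma ptrans_apply (x y : IS n) (t : Fin n) :
    (x.trans y) t = (x t).bind y := rfl

private lemma sandSmul_apply (x y : IS n) (t : Fin n) :
    smul n k x y t = ((x t).bind (sandE n k)).bind y := rfl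

private lemma mem_sdom {x : IS n} {t : Fin n} : t ∈ sdom x ↔ (x t).isSome := Iff.rfl

private lemma mem_sim {x : IS n} {t : Fin n} : t ∈ sim x ↔ (x.symm t).isSome := Iff.rfl

private lemma mem_sim_of_eq {x : IS n} {t s : Fin n} (h : x t = some s) : s ∈ sim x := by
  have h' : x.symm s = some t := x.eq_some_iff.2 h
  simp [mem_sim, h']

private lemma mem_sdom_of_eq {x : IS n} {t s : Fin n} (h : x t = some s) : t ∈ sdom x := by
  simp [mem_sdom, h]

/-- domain and image are equinumerous -/
private noncomputable def sdomSimEquiv (x : IS n) : ↥(sdom x) ≃ ↥(sim x) where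
  toFun a := ⟨(x a.1).get a.2, by
    exact mem_sim_of_eq (Option.some_get a.2).symm⟩
  invFun b := ⟨(x.symm b.1).get b.2, by
    have h : x.symm b.1 = some ((x.symm b.1).get b.2) := (Option.some_get b.2).symm
    exact mem_sdom_of_eq (x.eq_some_iff.1 h)⟩
  left_inv a := by
    have h : x a.1 = some ((x a.1).get a.2) := (Option.some_get a.2).symm
    have h2 : ((x a.1).get a.2) ∈ x.symm ((x a.1).get a.2) → True := fun _ => trivial
    have h3 : x.symm ((x a.1).get a.2) = some a.1 := x.eq_some_iff.2 h
    exact Subtype.ext (Option.get_of_mem _ h3)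
  right_inv b := by
    have h : x.symm b.1 = some ((x.symm b.1).get b.2) := (Option.some_get b.2).symm
    have h3 : x ((x.symm b.1).get b.2) = some b.1 := x.eq_some_iff.1 h
    exact Subtype.ext (Option.get_of_mem _ h3)

private lemma card_sdom_eq_srank (x : IS n) : Nat.card (sdom x) = srank x :=
  Nat.card_congr (sdomSimEquiv x)

private lemma srank_trans_le_right (x y : IS n) : srank (x.trans y) ≤ srank y := by
  apply Nat.card_mono (Set.toFinite _)
  intro b hb
  rw [mem_sim, PEquiv.symm_trans_rev, ptrans_apply] at hb
  rw [mem_sim]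
  cases hy : y.symm b with
  | none => rw [hy] at hb; simp at hb
  | some c => simp [hy]

private lemma srank_trans_le_left (x y : IS n) : srank (x.trans y) ≤ srank x := by
  rw [← card_sdom_eq_srank, ← card_sdom_eq_srank]
  apply Nat.card_mono (Set.toFinite _)
  intro t ht
  rw [mem_sdom, ptrans_apply] at ht
  rw [mem_sdom]
  cases hx : x t with
  | none => rw [hx] at ht; simp at ht
  | some c => simp [hx]

private lemma srank_smul_le_right (x y : IS n) : srank (smul n k x y) ≤ srank y :=
  srank_trans_le_right _ _

private lemma srank_smul_le_left (x y : IS n) : srank (smul n k x y) ≤ srank x :=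
  le_trans (srank_trans_le_left _ _) (srank_trans_le_left _ _)

private lemma srank_smul_middle (u g v : IS n) :
    srank (smul n k u (smul n k g v)) ≤ srank g :=
  le_trans (srank_smul_le_right _ _) (srank_smul_le_left _ _)

private lemma card_setA (hkn : k ≤ n) : Nat.card {i : Fin n | (i : ℕ) < k} = k := by
  have e : {i : Fin n | (i : ℕ) < k} ≃ Fin k :=
    { toFun := fun x => ⟨x.1.1, x.2⟩
      invFun := fun j => ⟨⟨j.1, lt_of_lt_of_le j.2 hkn⟩, j.2⟩
      left_inv := fun x => by ext; rfl
      right_inv := fun j => rfl }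
  rw [Nat.card_congr e, Nat.card_eq_fintype_card, Fintype.card_fin]

private lemma srank_sandE (hkn : k ≤ n) : srank (sandE n k) = k := by
  have hs : sim (sandE n k) = {i : Fin n | (i : ℕ) < k} := by
    ext i
    rw [mem_sim, sandE_symm_apply]
    split_ifs with h <;> simp [h]
  rw [srank, hs, card_setA hkn]

/-- idempotents of the sandwich semigroup -/
private def IsIdem (n k : ℕ) (g : IS n) : Prop := smul n k g g = g

private lemma isIdem_spec {g : IS n} (hg : IsIdem n k g) {t s : Fin n}
    (h : g t = some s) : s = t ∧ (s : ℕ) < k := by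
  have h0 := congrArg (fun f : IS n => f t) hg
  simp only [sandSmul_apply, h, Option.bind_some] at h0
  by_cases hs : (s : ℕ) < k
  · rw [sandE_apply, if_pos hs, Option.bind_some] at h0
    exact ⟨PEquiv.inj g (Option.mem_def.2 h0) (Option.mem_def.2 h), hs⟩
  · rw [sandE_apply, if_neg hs] at h0
    simp at h0

private lemma isIdem_apply_mem {g : IS n} (hg : IsIdem n k g) {t : Fin n}
    (ht : t ∈ sdom g) : g t = some t := by
  obtain ⟨s, hs⟩ := Option.isSome_iff_exists.1 ht
  have h1 := (isIdem_spec hg hs).1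
  rw [h1] at hs
  exact hs

private lemma isIdem_lt {g : IS n} (hg : IsIdem n k g) {t : Fin n}
    (ht : t ∈ sdom g) : (t : ℕ) < k :=
  (isIdem_spec hg (isIdem_apply_mem hg ht)).2

private lemma sim_eq_sdom_of_isIdem {g : IS n} (hg : IsIdem n k g) :
    sim g = sdom g := by
  ext b
  rw [mem_sim, mem_sdom]
  constructor
  · intro h
    obtain ⟨t, ht⟩ := Option.isSome_iff_exists.1 h
    have h2 : g t = some b := g.eq_some_iff.1 ht
    obtain ⟨rfl, -⟩ := isIdem_spec hg h2
    simp [h2]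
  · intro h
    have h2 : g b = some b := isIdem_apply_mem hg h
    have h3 : g.symm b = some b := g.eq_some_iff.2 h2
    simp [h3]

private lemma srank_isIdem {g : IS n} (hg : IsIdem n k g) :
    srank g = Nat.card (sdom g) := by
  rw [srank, sim_eq_sdom_of_isIdem hg]

section EmbPE
open Classical
/-- partial injection built from an embedding -/
private noncomputable def embPE (p : Fin n → Prop) (ψ : {i : Fin n // p i} ↪ Fin n) :
    IS n where
  toFun i := if h : p i then some (ψ ⟨i, h⟩) else none
  invFun b := if h : ∃ s : {i : Fin n // p i}, ψ s = b then some (Classical.choose h).1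
    else none
  inv a b := by
    constructor
    · intro hab
      split at hab
      · rename_i h
        have ha : (Classical.choose h).1 = a := by injection hab
        have hc : ψ (Classical.choose h) = b := Classical.choose_spec h
        have hp : p a := ha ▸ (Classical.choose h).2
        rw [dif_pos hp]
        have : (⟨a, hp⟩ : {i : Fin n // p i}) = Classical.choose h := by
          apply Subtype.ext; exact ha.symm
        rw [this, hc]
      · exact absurd hab (by simp)
    · intro hba
      split at hba
      · rename_i h
        have hb : ψ ⟨a, h⟩ = b := by injection hba
        have hex : ∃ s : {i : Fin n // p i}, ψ s = b := ⟨⟨a, h⟩, hb⟩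
        rw [dif_pos hex]
        have : Classical.choose hex = ⟨a, h⟩ :=
          ψ.injective ((Classical.choose_spec hex).trans hb.symm)
        rw [this]
      · exact absurd hba (by simp)

private lemma embPE_apply_pos {p : Fin n → Prop} {ψ : {i : Fin n // p i} ↪ Fin n}
    {i : Fin n} (h : p i) : embPE p ψ i = some (ψ ⟨i, h⟩) := by
  simp only [embPE, PEquiv.coe_mk_apply, dif_pos h]

private lemma embPE_apply_neg {p : Fin n → Prop} {ψ : {i : Fin n // p i} ↪ Fin n}
    {i : Fin n} (h : ¬ p i) : embPE p ψ i = none := by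
  simp only [embPE, PEquiv.coe_mk_apply, dif_neg h]

private lemma embPE_symm_apply {p : Fin n → Prop} {ψ : {i : Fin n // p i} ↪ Fin n}
    (s : {i : Fin n // p i}) : (embPE p ψ).symm (ψ s) = some s.1 := by
  apply (embPE p ψ).eq_some_iff.2
  rw [embPE_apply_pos s.2]

end EmbPE

/-- decomposable elements factor through an idempotent of the same rank -/
private lemma exists_idem_decomp (hkn : k ≤ n) {a : IS n}
    (ha : ∃ b c : IS n, smul n k b c = a) :
    ∃ g u v : IS n, IsIdem n k g ∧ srank g = srank a ∧
      smul n k u (smul n k g v) = a := by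
  classical
  have hra : srank a ≤ k := by
    obtain ⟨b, c, rfl⟩ := ha
    calc srank (smul n k b c) ≤ srank (b.trans (sandE n k)) := srank_trans_le_left _ _
      _ ≤ srank (sandE n k) := srank_trans_le_right _ _
      _ = k := srank_sandE hkn
  haveI : Fintype ↥(sim a) := Fintype.ofFinite _
  haveI : Fintype ↥{i : Fin n | (i : ℕ) < k} := Fintype.ofFinite _
  have hcard : Fintype.card ↥(sim a) ≤ Fintype.card ↥{i : Fin n | (i : ℕ) < k} := by
    rw [← Nat.card_eq_fintype_card, ← Nat.card_eq_fintype_card, card_setA hkn]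
    exact hra
  obtain ⟨ψ0⟩ := Function.Embedding.nonempty_of_card_le hcard
  set p : Fin n → Prop := fun i => i ∈ sim a with hp
  let ψ : {i : Fin n // p i} ↪ Fin n := ψ0.trans (Function.Embedding.subtype _)
  have hψk : ∀ s, ((ψ s : Fin n) : ℕ) < k := fun s => (ψ0 s).2
  set j : IS n := embPE p ψ with hj
  refine ⟨j.symm.trans j, a.trans j, j.symm, ?_, ?_, ?_⟩
  · -- idempotent
    apply PEquiv.ext
    intro t
    rw [sandSmul_apply]
    cases hst : j.symm t with
    | none => simp [ptrans_apply, hst]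
    | some w =>
      have hjw : j w = some t := j.eq_some_iff.1 hst
      have hpw : p w := by
        by_contra hc
        rw [embPE_apply_neg hc] at hjw
        cases hjw
      have htψ : t = ψ ⟨w, hpw⟩ := by
        rw [embPE_apply_pos hpw] at hjw
        exact (Option.some.inj hjw).symm
      have htk : (t : ℕ) < k := htψ ▸ hψk ⟨w, hpw⟩
      have hgt : (j.symm.trans j) t = some t := by
        rw [ptrans_apply, hst, Option.bind_some, hjw]
      rw [hgt, Option.bind_some, sandE_apply, if_pos htk, Option.bind_some, hgt]
  · -- rank
    have hsymm : (j.symm.trans j).symm = j.symm.trans j := by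
      rw [PEquiv.symm_trans_rev, PEquiv.symm_symm]
    have hbij : Function.Bijective
        (fun s : ↥(sim a) => (⟨ψ s, by
          rw [mem_sim, hsymm, ptrans_apply, embPE_symm_apply s, Option.bind_some,
            embPE_apply_pos s.2]
          simp⟩ : ↥(sim (j.symm.trans j)))) := by
      constructor
      · intro s₁ s₂ hs
        exact ψ.injective (by simpa using congrArg Subtype.val hs)
      · rintro ⟨b, hb⟩
        rw [mem_sim, hsymm, ptrans_apply] at hb
        cases hst : j.symm b with
        | none => rw [hst] at hb; simp at hb
        | some w =>
          have hjw : j w = some b := j.eq_some_iff.1 hst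
          have hpw : p w := by
            by_contra hc
            rw [embPE_apply_neg hc] at hjw
            cases hjw
          refine ⟨⟨w, hpw⟩, ?_⟩
          apply Subtype.ext
          rw [embPE_apply_pos hpw] at hjw
          exact Option.some.inj hjw
    rw [srank, srank, ← Nat.card_congr (Equiv.ofBijective _ hbij)]
  · -- decomposition
    apply PEquiv.ext
    intro t
    rw [sandSmul_apply]
    cases hat : a t with
    | none => simp [ptrans_apply, hat]
    | some s =>
      have hs : p s := mem_sim_of_eq hat
      have hut : (a.trans j) t = some (ψ ⟨s, hs⟩) := by
        rw [ptrans_apply, hat, Option.bind_some, embPE_apply_pos hs]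
      have hk1 : ((ψ ⟨s, hs⟩ : Fin n) : ℕ) < k := hψk ⟨s, hs⟩
      rw [hut, Option.bind_some, sandE_apply, if_pos hk1, Option.bind_some, sandSmul_apply,
        ptrans_apply, embPE_symm_apply ⟨s, hs⟩, Option.bind_some, embPE_apply_pos hs,
        Option.bind_some, sandE_apply, if_pos hk1, Option.bind_some,
        embPE_symm_apply ⟨s, hs⟩]

private lemma ofSet_apply' (P : Set (Fin n)) [DecidablePred (· ∈ P)] (t : Fin n) :
    PEquiv.ofSet P t = if t ∈ P then some t else none := rfl

/-- the number of idempotents below an idempotent `g` is `2 ^ srank g` -/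
private lemma card_below {g : IS n} (hg : IsIdem n k g) :
    Nat.card {h : IS n // IsIdem n k h ∧ smul n k h g = h} = 2 ^ srank g := by
  classical
  have key : ∀ (P : Set (Fin n)) (inst : DecidablePred (· ∈ P)), P ⊆ sdom g →
      IsIdem n k (@PEquiv.ofSet _ P inst) ∧
        smul n k (@PEquiv.ofSet _ P inst) g = @PEquiv.ofSet _ P inst := by
    intro P inst hP
    have hPk : ∀ t ∈ P, (t : ℕ) < k := fun t ht => isIdem_lt hg (hP ht)
    constructor
    · apply PEquiv.ext
      intro t
      rw [sandSmul_apply, ofSet_apply']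
      by_cases htP : t ∈ P
      · rw [if_pos htP, Option.bind_some, sandE_apply, if_pos (hPk t htP),
          Option.bind_some, ofSet_apply', if_pos htP]
      · rw [if_neg htP]; rfl
    · apply PEquiv.ext
      intro t
      rw [sandSmul_apply, ofSet_apply']
      by_cases htP : t ∈ P
      · rw [if_pos htP, Option.bind_some, sandE_apply, if_pos (hPk t htP),
          Option.bind_some, isIdem_apply_mem hg (hP htP)]
      · rw [if_neg htP]; rfl
  have hsub : ∀ (h : IS n), IsIdem n k h → smul n k h g = h → sdom h ⊆ sdom g := by
    intro h hh1 hh2 t ht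
    have h1 : h t = some t := isIdem_apply_mem hh1 ht
    have h0 := congrArg (fun f : IS n => f t) hh2
    simp only [sandSmul_apply, h1, Option.bind_some, sandE_apply,
      if_pos (isIdem_lt hh1 ht), Option.bind_some] at h0
    exact mem_sdom_of_eq h0
  have hequiv : {h : IS n // IsIdem n k h ∧ smul n k h g = h} ≃ (↥(sdom g) → Bool) :=
    { toFun := fun h => fun d => (h.1 d.1).isSome
      invFun := fun f =>
        ⟨PEquiv.ofSet {t | ∃ hd : t ∈ sdom g, f ⟨t, hd⟩ = true},
          key {t | ∃ hd : t ∈ sdom g, f ⟨t, hd⟩ = true} _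
            (fun t ht => by simp only [Set.mem_setOf_eq] at ht; exact ht.choose)⟩
      left_inv := by
        rintro ⟨h, hh1, hh2⟩
        apply Subtype.ext
        apply PEquiv.ext
        intro t
        show (PEquiv.ofSet {t | ∃ hd : t ∈ sdom g, (h t).isSome = true} : IS n) t = h t
        rw [ofSet_apply']
        by_cases htP : t ∈ {t | ∃ hd : t ∈ sdom g, (h t).isSome = true}
        · rw [if_pos htP]
          obtain ⟨hd, hf⟩ := htP
          exact (isIdem_apply_mem hh1 hf).symm
        · rw [if_neg htP]
          cases hht : h t with
          | none => rfl
          | some s =>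
            exfalso
            obtain ⟨hst, -⟩ := isIdem_spec hh1 hht
            rw [hst] at hht
            have htd : t ∈ sdom h := mem_sdom_of_eq hht
            exact htP ⟨hsub h hh1 hh2 htd, by simp [mem_sdom] at htd; exact htd⟩
      right_inv := by
        intro f
        funext d
        show ((PEquiv.ofSet {t | ∃ hd : t ∈ sdom g, f ⟨t, hd⟩ = true} : IS n) d.1).isSome
          = f d
        rw [ofSet_apply']
        by_cases hfd : f d = true
        · rw [if_pos ⟨d.2, by rwa [Subtype.coe_eta]⟩]
          simp [hfd]
        · rw [if_neg (by rintro ⟨hd, hf⟩; rw [Subtype.coe_eta] at hf; exact hfd hf)]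
          simp only [Option.isSome_none]
          exact (Bool.not_eq_true _).mp hfd |>.symm ▸ rfl }
  rw [Nat.card_congr hequiv, Nat.card_fun, srank_isIdem hg]
  have : Nat.card Bool = 2 := by rw [Nat.card_eq_fintype_card, Fintype.card_bool]
  rw [this]

private lemma aut_symm (π : Equiv.Perm (IS n))
    (hπ : ∀ x y : IS n, π (smul n k x y) = smul n k (π x) (π y)) :
    ∀ x y : IS n, π.symm (smul n k x y) = smul n k (π.symm x) (π.symm y) := by
  intro x y
  apply π.injective
  rw [hπ, apply_symm_apply, apply_symm_apply, apply_symm_apply]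

private lemma aut_isIdem (π : Equiv.Perm (IS n))
    (hπ : ∀ x y : IS n, π (smul n k x y) = smul n k (π x) (π y))
    {g : IS n} (hg : IsIdem n k g) : IsIdem n k (π g) := by
  unfold IsIdem at *
  rw [← hπ, hg]

private lemma aut_srank_idem (π : Equiv.Perm (IS n))
    (hπ : ∀ x y : IS n, π (smul n k x y) = smul n k (π x) (π y))
    {g : IS n} (hg : IsIdem n k g) : srank (π g) = srank g := by
  have h1 := card_below hg
  have h2 := card_below (aut_isIdem π hπ hg)
  have hcard : Nat.card {h : IS n // IsIdem n k h ∧ smul n k h g = h} =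
      Nat.card {h : IS n // IsIdem n k h ∧ smul n k h (π g) = h} := by
    apply Nat.card_congr
    refine
      { toFun := fun h => ⟨π h.1, aut_isIdem π hπ h.2.1, ?_⟩
        invFun := fun h => ⟨π.symm h.1, aut_isIdem π.symm (aut_symm π hπ) h.2.1, ?_⟩
        left_inv := fun h => Subtype.ext (symm_apply_apply π h.1)
        right_inv := fun h => Subtype.ext (apply_symm_apply π h.1) }
    · rw [← hπ, h.2.2]
    · have := aut_symm π hπ h.1 (π g)
      rw [h.2.2, symm_apply_apply] at this
      exact this.symm
  apply Nat.pow_right_injective (le_refl 2)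
  show 2 ^ srank (π g) = 2 ^ srank g
  rw [← h2, ← h1]
  exact hcard.symm

end Aux

/-- automorphisms of `(IS_n, *)` preserve the rank of decomposable
elements. -/
theorem aut_preserves_rank_of_decomposable (n k : ℕ) (hk : 1 ≤ k) (hkn : k ≤ n)
    (π : Equiv.Perm (IS n))
    (hπ : ∀ x y : IS n, π (smul n k x y) = smul n k (π x) (π y))
    (a : IS n) (ha : ∃ b c : IS n, smul n k b c = a) :
    srank (π a) = srank a := by
  have key : ∀ (σ : Equiv.Perm (IS n)),
      (∀ x y : IS n, σ (smul n k x y) = smul n k (σ x) (σ y)) →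
      ∀ d : IS n, (∃ b c : IS n, smul n k b c = d) → srank (σ d) ≤ srank d := by
    intro σ hσ d hd
    obtain ⟨g, u, v, hg, hrg, hdec⟩ := exists_idem_decomp hkn hd
    calc srank (σ d) = srank (smul n k (σ u) (smul n k (σ g) (σ v))) := by
          rw [← hσ, ← hσ, hdec]
      _ ≤ srank (σ g) := srank_smul_middle _ _ _
      _ = srank g := aut_srank_idem σ hσ hg
      _ = srank d := hrg
  have h1 : srank (π a) ≤ srank a := key π hπ a ha
  have h2 : srank a ≤ srank (π a) := by
    have hπa : ∃ b c : IS n, smul n k b c = π a := by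
      obtain ⟨b, c, rfl⟩ := ha
      exact ⟨π b, π c, (hπ b c).symm⟩
    have := key π.symm (aut_symm π hπ) (π a) hπa
    rwa [Equiv.symm_apply_apply] at this
  omega
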